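/- arXiv:1408.2488 — 2 statements merged into one kernel-verified Lean document; each statement's English description precedes it below -/
import Mathlib

section
/- Let k ⊆ ℂ be a subfield, and let α ∈ ℂ be transcendental over k. Then for any β ∈ ℂ transcendental over k, there exists an automorphism σ of ℂ fixing k pointwise with σ(α) = β. -/
set_option synthInstance.maxHeartbeats 1000000
set_option maxHeartbeats 4000000

open Algebra Set

private theorem helperB {F K : Type*} [Field F] [Field K] [Algebra F K] (A : Subalgebra F K)
    (S : Set K) (hs : (A.val).range = Algebra.adjoin F S) (x : K) :
    IsAlgebraic A x ↔ IsAlgebraic (IntermediateField.adjoin F S) x := by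
  have hinj : Function.Injective (algebraMap A K) := Subtype.val_injective
  haveI : NoZeroSMulDivisors A K := ⟨fun {c x} h => by
    rw [Algebra.smul_def, mul_eq_zero] at h
    exact h.imp_left (fun h' => hinj (h'.trans (map_zero _).symm))⟩
  letI : Algebra (FractionRing A) K := FractionRing.liftAlgebra A K
  haveI : IsScalarTower A (FractionRing A) K := FractionRing.isScalarTower_liftAlgebra A K
  rw [IsFractionRing.isAlgebraic_iff A (FractionRing A) K]
  have hgi : Function.Injective (A.val : A →ₐ[F] K) := Subtype.val_injective
  let f : FractionRing A →ₐ[F] K := IsFractionRing.liftAlgHom hgi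
  have hrange : f.fieldRange = IntermediateField.adjoin F S :=
    IsFractionRing.liftAlgHom_fieldRange_eq_of_range_eq hgi hs
  let e : FractionRing A ≃ₐ[F] (IntermediateField.adjoin F S) :=
    (AlgEquiv.ofInjectiveField f).trans (IntermediateField.equivOfEq hrange)
  have hcomp : ((algebraMap (IntermediateField.adjoin F S) K).comp
        (e : FractionRing A →+* (IntermediateField.adjoin F S)))
      = (RingHom.id K).comp (algebraMap (FractionRing A) K) := by
    apply IsLocalization.ringHom_ext (nonZeroDivisors A)
    ext a
    have h1 : algebraMap (IntermediateField.adjoin F S) K (e (algebraMap A (FractionRing A) a))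
        = f (algebraMap A (FractionRing A) a) := rfl
    have h2 : f (algebraMap A (FractionRing A) a) = a := by
      simp [f, IsFractionRing.liftAlgHom]
    have h3 : algebraMap (FractionRing A) K (algebraMap A (FractionRing A) a) = a :=
      (IsScalarTower.algebraMap_apply A (FractionRing A) K a).symm
    simp [h1, h2, h3]
  exact (isAlgebraic_ringHom_iff_of_comp_eq e.toRingEquiv (RingHom.id K)
    Function.injective_id hcomp).symm

private theorem helperTR {F K : Type*} [Field F] [Field K] [Algebra F K] (S : Set K) (b x : K)
    (hb : IsAlgebraic (Algebra.adjoin F S) b)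
    (hx : IsAlgebraic (Algebra.adjoin F (insert b S)) x) :
    IsAlgebraic (Algebra.adjoin F S) x := by
  rw [helperB _ S (Subalgebra.range_val _)] at hb ⊢
  rw [helperB _ (insert b S) (Subalgebra.range_val _)] at hx
  have hbE : IsIntegral (IntermediateField.adjoin F S) b := hb.isIntegral
  let M : IntermediateField (IntermediateField.adjoin F S) K :=
    IntermediateField.adjoin (IntermediateField.adjoin F S) {b}
  haveI : FiniteDimensional (IntermediateField.adjoin F S) M :=
    IntermediateField.adjoin.finiteDimensional hbE
  have hM : M.restrictScalars F = IntermediateField.adjoin F (insert b S) := by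
    simpa [Set.union_singleton] using IntermediateField.adjoin_adjoin_left F S {b}
  rw [← hM] at hx
  have hxM : IsAlgebraic M x := hx
  have h2 : IsIntegral (IntermediateField.adjoin F S) x := isIntegral_trans x hxM.isIntegral
  exact h2.isAlgebraic

section Helpers

variable {F K : Type*} [Field F] [Field K] [Algebra F K]

private theorem helperL1 {S : Set K} (hS : AlgebraicIndependent F ((↑) : S → K)) {a : K}
    (ha : a ∈ S) : Transcendental (Algebra.adjoin F (S \ {a})) a := by
  classical
  have hni : a ∉ S \ {a} := by simp
  have hins : insert a (S \ {a}) = S := Set.insert_diff_singleton.trans (Set.insert_eq_of_mem ha)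
  have hS' : AlgebraicIndependent F ((↑) : ↥(insert a (S \ {a})) → K) := by
    rw [hins]; exact hS
  have hmain : AlgebraicIndependent F
      (fun o : Option (S \ {a} : Set K) => o.elim a ((↑) : (S \ {a} : Set K) → K)) := by
    have h := hS'.comp (Set.subtypeInsertEquivOption hni).symm (Equiv.injective _)
    convert h using 1
    funext o
    cases o with
    | none => simp [Set.subtypeInsertEquivOption]
    | some u => simp [Set.subtypeInsertEquivOption]
  have h2 := ((hS.mono Set.diff_subset).option_iff_transcendental a).1 hmain
  rwa [Subtype.range_coe] at h2

private theorem helperL2 {S : Set K} (hS : AlgebraicIndependent F ((↑) : S → K)) {b : K}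
    (hb : Transcendental (Algebra.adjoin F S) b) (hbS : b ∉ S) :
    AlgebraicIndependent F ((↑) : ↥(insert b S) → K) := by
  classical
  have hopt : AlgebraicIndependent F (fun o : Option S => o.elim b ((↑) : S → K)) :=
    (Subtype.range_coe ▸ hS.option_iff_transcendental b).2 hb
  convert hopt.comp _ (Set.subtypeInsertEquivOption hbS).injective
  ext x
  by_cases h : ↑x = b <;> simp [h, Set.subtypeInsertEquivOption]

private theorem helperL4 {t : Set K} (ht : AlgebraicIndependent F ((↑) : t → K))
    (halg : ∀ x : K, IsAlgebraic (Algebra.adjoin F t) x) :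
    IsTranscendenceBasis F ((↑) : t → K) := by
  refine ⟨ht, fun u hu hsub => ?_⟩
  rw [Subtype.range_coe] at hsub ⊢
  refine hsub.antisymm fun a hau => ?_
  by_contra hat
  have h1 : Transcendental (Algebra.adjoin F (u \ {a})) a := helperL1 hu hau
  have h2 : Transcendental (Algebra.adjoin F t) a :=
    h1.of_tower_top_of_subalgebra_le (Algebra.adjoin_mono (subset_diff_singleton hsub hat))
  exact h2 (halg a)

private theorem helperSingleton {b : K} (hb : Transcendental F b) :
    AlgebraicIndependent F ((↑) : ({b} : Set K) → K) := by
  have h0 : AlgebraicIndependent F ((↑) : (∅ : Set K) → K) :=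
    algebraicIndependent_empty
  have h1 : Transcendental (Algebra.adjoin F (∅ : Set K)) b := by
    rw [Algebra.adjoin_empty]
    intro h
    exact hb (Subalgebra.isAlgebraic_of_isAlgebraic_bot h)
  have h := helperL2 h0 h1 (Set.notMem_empty b)
  have hset : (insert b (∅ : Set K)) = {b} := by simp
  rwa [hset] at h

end Helpers

private theorem helperKey (k : Subfield ℂ) (s t : Set ℂ)
    (hs : IsTranscendenceBasis k ((↑) : s → ℂ)) (ht : IsTranscendenceBasis k ((↑) : t → ℂ))
    (e : s ≃ t) {α β : ℂ} (hαs : α ∈ s) (heα : ((e ⟨α, hαs⟩ : t) : ℂ) = β) :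
    ∃ σ : ℂ ≃+* ℂ, (∀ a ∈ k, σ a = a) ∧ σ α = β := by
  letI : IsAlgClosure (adjoin k (Set.range ((↑) : s → ℂ))) ℂ :=
    IsAlgClosed.isAlgClosure_of_transcendence_basis _ hs
  letI : IsAlgClosure (adjoin k (Set.range ((↑) : t → ℂ))) ℂ :=
    IsAlgClosed.isAlgClosure_of_transcendence_basis _ ht
  let φ : adjoin k (Set.range ((↑) : s → ℂ)) ≃ₐ[k] adjoin k (Set.range ((↑) : t → ℂ)) :=
    hs.1.aevalEquiv.symm.trans ((MvPolynomial.renameEquiv k e).trans ht.1.aevalEquiv)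
  refine ⟨IsAlgClosure.equivOfEquiv ℂ ℂ φ.toRingEquiv, ?_, ?_⟩
  · intro a ha
    have h1 : algebraMap (adjoin k (Set.range ((↑) : s → ℂ))) ℂ
        (algebraMap k _ ⟨a, ha⟩) = a := by
      rw [← IsScalarTower.algebraMap_apply]; rfl
    have h1' : algebraMap (adjoin k (Set.range ((↑) : t → ℂ))) ℂ
        (algebraMap k _ ⟨a, ha⟩) = a := by
      rw [← IsScalarTower.algebraMap_apply]; rfl
    have hmain := IsAlgClosure.equivOfEquiv_algebraMap ℂ ℂ φ.toRingEquiv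
      (algebraMap k _ (⟨a, ha⟩ : k))
    rw [h1] at hmain
    rw [show φ.toRingEquiv (algebraMap k _ (⟨a, ha⟩ : k)) = algebraMap k _ (⟨a, ha⟩ : k) from
      φ.commutes _] at hmain
    rw [hmain, h1']
  · have h1 : algebraMap (adjoin k (Set.range ((↑) : s → ℂ))) ℂ
        (hs.1.aevalEquiv (MvPolynomial.X ⟨α, hαs⟩)) = α := by
      rw [hs.1.algebraMap_aevalEquiv, MvPolynomial.aeval_X]
    have h2 : φ.toRingEquiv (hs.1.aevalEquiv (MvPolynomial.X ⟨α, hαs⟩))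
        = ht.1.aevalEquiv (MvPolynomial.X (e ⟨α, hαs⟩)) := by
      show φ (hs.1.aevalEquiv (MvPolynomial.X ⟨α, hαs⟩))
        = ht.1.aevalEquiv (MvPolynomial.X (e ⟨α, hαs⟩))
      simp only [φ, AlgEquiv.trans_apply, AlgEquiv.symm_apply_apply,
        MvPolynomial.renameEquiv_apply, MvPolynomial.rename_X]
    have h3 : algebraMap (adjoin k (Set.range ((↑) : t → ℂ))) ℂ
        (ht.1.aevalEquiv (MvPolynomial.X (e ⟨α, hαs⟩))) = β := by
      rw [ht.1.algebraMap_aevalEquiv, MvPolynomial.aeval_X, heα]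
    have hmain := IsAlgClosure.equivOfEquiv_algebraMap ℂ ℂ φ.toRingEquiv
      (hs.1.aevalEquiv (MvPolynomial.X ⟨α, hαs⟩))
    rw [h1, h2] at hmain
    rw [hmain, h3]

private theorem helperMaxBasis (k : Subfield ℂ) (s : Set ℂ)
    (hmax : Maximal (fun (x : Set ℂ) ↦ AlgebraicIndependent k ((↑) : x → ℂ) ∧ x ⊆ Set.univ) s) :
    IsTranscendenceBasis k ((↑) : s → ℂ) := by
  refine ⟨hmax.prop.1, fun u hu hsu => ?_⟩
  simp only [Subtype.range_coe_subtype, Set.setOf_mem_eq] at hsu ⊢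
  exact hmax.eq_of_le ⟨hu, Set.subset_univ _⟩ hsu

/-- If `α, β ∈ ℂ` are both transcendental over a subfield `k ⊆ ℂ`, then there is a
field automorphism of `ℂ` fixing `k` pointwise and sending `α` to `β`. -/
theorem stmt_3 (k : Subfield ℂ) (α β : ℂ)
    (hα : Transcendental k α) (hβ : Transcendental k β) :
    ∃ σ : ℂ ≃+* ℂ, (∀ a ∈ k, σ a = a) ∧ σ α = β := by
  classical
  by_cases hab : α = β
  · exact ⟨RingEquiv.refl ℂ, fun a _ => rfl, hab⟩
  by_cases hind : AlgebraicIndependent k ((↑) : ↥({α, β} : Set ℂ) → ℂ)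
  · obtain ⟨s, hsub, hmax⟩ := exists_maximal_algebraicIndependent ({α, β} : Set ℂ) Set.univ
      (Set.subset_univ _) hind
    have hbasis : IsTranscendenceBasis k ((↑) : s → ℂ) := helperMaxBasis k s hmax
    have hα_mem : α ∈ s := hsub (by simp)
    have hβ_mem : β ∈ s := hsub (by simp)
    refine helperKey k s s hbasis hbasis
      (Equiv.swap ⟨α, hα_mem⟩ ⟨β, hβ_mem⟩) hα_mem ?_
    rw [Equiv.swap_apply_left]
  · -- dependent case
    have h2 : IsAlgebraic (Algebra.adjoin k ({β} : Set ℂ)) α := by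
      by_contra h
      have htr : Transcendental (Algebra.adjoin k ({β} : Set ℂ)) α := h
      have h3 := helperL2 (helperSingleton hβ) htr (by simpa using hab)
      exact hind h3
    obtain ⟨s, hsub, hmax⟩ := exists_maximal_algebraicIndependent ({α} : Set ℂ) Set.univ
      (Set.subset_univ _) (helperSingleton hα)
    have hsbasis : IsTranscendenceBasis k ((↑) : s → ℂ) := helperMaxBasis k s hmax
    have hαs : α ∈ s := hsub rfl
    have hS0 : AlgebraicIndependent k ((↑) : ↥(s \ {α}) → ℂ) :=
      hsbasis.1.mono Set.diff_subset
    have hβS0 : Transcendental (Algebra.adjoin k (s \ {α})) β := by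
      intro hb
      have hxins : IsAlgebraic (Algebra.adjoin k (insert β (s \ {α}))) α :=
        h2.tower_top_of_subalgebra_le
          (Algebra.adjoin_mono (by simp : ({β} : Set ℂ) ⊆ insert β (s \ {α})))
      exact (helperL1 hsbasis.1 hαs) (helperTR (s \ {α}) β α hb hxins)
    have hβnot : β ∉ s \ {α} := fun h =>
      hβS0 (isAlgebraic_algebraMap (⟨β, Algebra.subset_adjoin h⟩ : Algebra.adjoin k (s \ {α})))
    have htind : AlgebraicIndependent k ((↑) : ↥(insert β (s \ {α})) → ℂ) :=
      helperL2 hS0 hβS0 hβnot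
    have halg : ∀ x : ℂ, IsAlgebraic (Algebra.adjoin k (insert β (s \ {α}))) x := by
      intro x
      have hbt : IsAlgebraic (Algebra.adjoin k (insert β (s \ {α}))) α :=
        h2.tower_top_of_subalgebra_le (Algebra.adjoin_mono (by simp))
      have hxs : IsAlgebraic (Algebra.adjoin k s) x := by
        haveI := hsbasis.isAlgebraic
        have h := Algebra.IsAlgebraic.isAlgebraic
          (R := adjoin k (Set.range ((↑) : s → ℂ))) x
        rwa [Subtype.range_coe] at h
      have hxs' : IsAlgebraic (Algebra.adjoin k (insert α (insert β (s \ {α})))) x := by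
        refine hxs.tower_top_of_subalgebra_le (Algebra.adjoin_mono fun y hy => ?_)
        by_cases hyα : y = α
        · simp [hyα]
        · exact Set.mem_insert_of_mem _ (Set.mem_insert_of_mem _ ⟨hy, hyα⟩)
      exact helperTR (insert β (s \ {α})) α x hbt hxs'
    have htbasis : IsTranscendenceBasis k ((↑) : ↥(insert β (s \ {α})) → ℂ) :=
      helperL4 htind halg
    have hαni : α ∉ s \ {α} := by simp
    have hs_eq : insert α (s \ {α}) = s :=
      Set.insert_diff_singleton.trans (Set.insert_eq_of_mem hαs)
    let e : ↥s ≃ ↥(insert β (s \ {α})) :=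
      ((Equiv.setCongr hs_eq.symm).trans (Set.subtypeInsertEquivOption hαni)).trans
        (Set.subtypeInsertEquivOption hβnot).symm
    refine helperKey k s (insert β (s \ {α})) hsbasis htbasis e hαs ?_
    simp [e, Set.subtypeInsertEquivOption]
end

section
/- Let k ⊆ ℂ be a countable subfield, A a finitely generated k-algebra which is an integral domain, with field of fractions K. Then the set of points of the associated complex affine variety that are images of a fixed generic point α (corresponding to an injective k-algebra homomorphism) under automorphisms of ℂ over k equals the complement in the variety of the union of all proper closed subvarieties defined over k. -/
open Cardinal

noncomputable section StmtAux

lemma stmt7_key {F K L : Type} [Field F] [Countable F] [Field K] [Field L]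
    [Algebra F K] [Algebra F L] [IsAlgClosed K] [IsAlgClosed L]
    (hK : ℵ₀ < #K) (hKL : #K = #L) :
    ∃ σ : K ≃+* L, ∀ x : F, σ (algebraMap F K x) = algebraMap F L x := by
  obtain ⟨s, hs⟩ := exists_isTranscendenceBasis F K
  obtain ⟨t, ht⟩ := exists_isTranscendenceBasis F L
  have hF : #F ≤ ℵ₀ := Cardinal.mk_le_aleph0
  have hcs : #K = #s :=
    IsAlgClosed.cardinal_eq_cardinal_transcendence_basis_of_aleph0_lt' _ hs hF hK
  have hct : #L = #t :=
    IsAlgClosed.cardinal_eq_cardinal_transcendence_basis_of_aleph0_lt' _ ht hF (hKL ▸ hK)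
  obtain ⟨e⟩ := Cardinal.eq.1 (hcs.symm.trans (hKL.trans hct))
  letI := IsAlgClosed.isAlgClosure_of_transcendence_basis _ hs
  letI := IsAlgClosed.isAlgClosure_of_transcendence_basis _ ht
  let e' : Algebra.adjoin F (Set.range ((↑) : s → K)) ≃ₐ[F]
      Algebra.adjoin F (Set.range ((↑) : t → L)) :=
    (hs.1.aevalEquiv.symm.trans (MvPolynomial.renameEquiv F e)).trans ht.1.aevalEquiv
  refine ⟨IsAlgClosure.equivOfEquiv K L e'.toRingEquiv, fun x => ?_⟩
  rw [IsScalarTower.algebraMap_apply F (Algebra.adjoin F (Set.range ((↑) : s → K))) K,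
    IsAlgClosure.equivOfEquiv_algebraMap]
  show algebraMap _ L (e' (algebraMap F _ x)) = _
  rw [AlgEquiv.commutes, ← IsScalarTower.algebraMap_apply]

lemma stmt7_key2 {A : Type} [CommRing A] [IsDomain A] [Countable A]
    (g₁ g₂ : A →+* ℂ) (h₁ : Function.Injective g₁) (h₂ : Function.Injective g₂) :
    ∃ σ : ℂ ≃+* ℂ, ∀ x, σ (g₁ x) = g₂ x := by
  letI F := FractionRing A
  haveI : Countable F := by
    refine Function.Surjective.countable (f := fun p : A × A =>
      algebraMap A F p.1 / algebraMap A F p.2) fun z => ?_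
    obtain ⟨a, b, -, rfl⟩ := IsFractionRing.div_surjective (A := A) z
    exact ⟨(a, b), rfl⟩
  let l₁ : F →+* ℂ := IsFractionRing.lift h₁
  let l₂ : F →+* ℂ := IsFractionRing.lift h₂
  have hC : ℵ₀ < #ℂ := by rw [mk_complex]; exact Cardinal.aleph0_lt_continuum
  obtain ⟨σ, hσ⟩ := @stmt7_key F ℂ ℂ _ _ _ _ l₁.toAlgebra l₂.toAlgebra _ _ hC rfl
  refine ⟨σ, fun x => ?_⟩
  have := hσ (algebraMap A F x)
  show σ (g₁ x) = g₂ x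
  rwa [show @algebraMap F ℂ _ _ l₁.toAlgebra = l₁ from rfl,
    show @algebraMap F ℂ _ _ l₂.toAlgebra = l₂ from rfl,
    IsFractionRing.lift_algebraMap, IsFractionRing.lift_algebraMap] at this

end StmtAux

/-- The zero locus in `ℂⁿ` of a set of polynomials with coefficients in a
subfield `k ⊆ ℂ`. -/
def zeroLocus (k : Subfield ℂ) (n : ℕ) (I : Set (MvPolynomial (Fin n) k)) :
    Set (Fin n → ℂ) :=
  {z | ∀ f ∈ I, MvPolynomial.aeval z f = 0}

set_option maxHeartbeats 1000000 in
set_option synthInstance.maxHeartbeats 1000000 in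
/-- (Proposition 3.2.)  Let `k ⊆ ℂ` be countable, `𝔭` a prime ideal over `k`, and
`α` a `k`-generic point of `V = Z(𝔭)` (the evaluation homomorphism is injective,
i.e. every polynomial over `k` vanishing at `α` lies in `𝔭`).  Then the set of
conjugates `α^σ = σ⁻¹ ∘ α` of `α` under automorphisms of `ℂ` over `k` equals the
complement in `V` of the union of all proper closed subvarieties of `V` defined
over `k`. -/
theorem stmt_7 (k : Subfield ℂ) [Countable k] (n : ℕ)
    (𝔭 : Ideal (MvPolynomial (Fin n) k)) (h𝔭 : 𝔭.IsPrime)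
    (α : Fin n → ℂ) (hα : α ∈ zeroLocus k n 𝔭)
    (hgen : ∀ f : MvPolynomial (Fin n) k, MvPolynomial.aeval α f = 0 → f ∈ 𝔭) :
    {β : Fin n → ℂ | ∃ σ : ℂ ≃+* ℂ, (∀ a ∈ k, σ a = a) ∧ β = fun i => σ.symm (α i)} =
      zeroLocus k n 𝔭 \
        ⋃ (I : Ideal (MvPolynomial (Fin n) k))
          (_ : 𝔭 ≤ I) (_ : zeroLocus k n I ≠ zeroLocus k n 𝔭),
            zeroLocus k n I := by
  ext β
  simp only [Set.mem_setOf_eq, Set.mem_diff, Set.mem_iUnion, not_exists]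
  constructor
  · rintro ⟨σ, hσk, rfl⟩
    have hσk' : ∀ a ∈ k, σ.symm a = a := fun a ha => by
      conv_lhs => rw [← hσk a ha]
      exact σ.symm_apply_apply a
    have hcomm : ∀ f : MvPolynomial (Fin n) k,
        MvPolynomial.aeval (fun i => σ.symm (α i)) f = σ.symm (MvPolynomial.aeval α f) := by
      intro f
      have : ((MvPolynomial.aeval (fun i => σ.symm (α i)) : MvPolynomial (Fin n) k →ₐ[k] ℂ) :
          MvPolynomial (Fin n) k →+* ℂ) =
          (σ.symm : ℂ →+* ℂ).comp
            ((MvPolynomial.aeval α : MvPolynomial (Fin n) k →ₐ[k] ℂ) :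
              MvPolynomial (Fin n) k →+* ℂ) := by
        apply MvPolynomial.ringHom_ext
        · intro a
          simp only [RingHom.coe_comp, Function.comp_apply, AlgHom.coe_toRingHom,
            MvPolynomial.aeval_C]
          exact (hσk' _ a.2).symm
        · intro i
          simp [MvPolynomial.aeval_X]
      exact RingHom.congr_fun this f
    refine ⟨fun f hf => by rw [hcomm, hα f hf, map_zero], ?_⟩
    intro I hle hne hβI
    apply hne
    have hIp : I ≤ 𝔭 := by
      intro f hf
      have h0 : MvPolynomial.aeval (fun i => σ.symm (α i)) f = 0 := hβI f hf
      rw [hcomm] at h0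
      have : MvPolynomial.aeval α f = 0 := by
        have := congrArg σ h0
        simpa using this
      exact hgen f this
    have : I = 𝔭 := le_antisymm hIp hle
    rw [this]
  · rintro ⟨hβZ, hβU⟩
    -- the vanishing ideal of β is exactly 𝔭
    have hker : ∀ f : MvPolynomial (Fin n) k, MvPolynomial.aeval β f = 0 ↔ f ∈ 𝔭 := by
      intro f
      refine ⟨fun h0 => ?_, fun hf => hβZ f hf⟩
      by_contra hf
      have hαf : MvPolynomial.aeval α f ≠ 0 := fun h => hf (hgen f h)
      set I : Ideal (MvPolynomial (Fin n) k) := 𝔭 ⊔ Ideal.span {f} with hI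
      have hfI : f ∈ I := Ideal.mem_sup_right (Ideal.subset_span rfl)
      have hβI : β ∈ zeroLocus k n I := by
        intro g hg
        obtain ⟨p, hp, q, hq, rfl⟩ := Submodule.mem_sup.1 hg
        obtain ⟨c, rfl⟩ := Ideal.mem_span_singleton'.1 hq
        simp only [map_add, map_mul, hβZ p hp, h0, mul_zero, add_zero]
      have hne : zeroLocus k n I ≠ zeroLocus k n 𝔭 := by
        intro hEq
        have : α ∈ zeroLocus k n I := hEq.symm ▸ hα
        exact hαf (this f hfI)
      exact hβU I le_sup_left hne hβI
    -- build the automorphism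
    haveI : IsDomain (MvPolynomial (Fin n) k ⧸ 𝔭) := (Ideal.Quotient.isDomain_iff_prime 𝔭).2 h𝔭
    haveI : Countable (MvPolynomial (Fin n) k) := by
      unfold MvPolynomial; exact AddMonoidAlgebra.coeffEquiv.injective.countable
    haveI : Countable (MvPolynomial (Fin n) k ⧸ 𝔭) :=
      Function.Surjective.countable Ideal.Quotient.mk_surjective
    let g₁ : MvPolynomial (Fin n) k ⧸ 𝔭 →+* ℂ :=
      Ideal.Quotient.lift 𝔭
        ((MvPolynomial.aeval β : MvPolynomial (Fin n) k →ₐ[k] ℂ) : MvPolynomial (Fin n) k →+* ℂ)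
        (fun a ha => (hker a).2 ha)
    let g₂ : MvPolynomial (Fin n) k ⧸ 𝔭 →+* ℂ :=
      Ideal.Quotient.lift 𝔭
        ((MvPolynomial.aeval α : MvPolynomial (Fin n) k →ₐ[k] ℂ) : MvPolynomial (Fin n) k →+* ℂ)
        (fun a ha => hα a ha)
    have h₁ : Function.Injective g₁ := by
      rw [injective_iff_map_eq_zero]
      intro x hx
      obtain ⟨f, rfl⟩ := Ideal.Quotient.mk_surjective x
      have : MvPolynomial.aeval β f = 0 := hx
      rw [Ideal.Quotient.eq_zero_iff_mem]
      exact (hker f).1 this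
    have h₂ : Function.Injective g₂ := by
      rw [injective_iff_map_eq_zero]
      intro x hx
      obtain ⟨f, rfl⟩ := Ideal.Quotient.mk_surjective x
      have : MvPolynomial.aeval α f = 0 := hx
      rw [Ideal.Quotient.eq_zero_iff_mem]
      exact hgen f this
    obtain ⟨σ, hσ⟩ := stmt7_key2 (A := MvPolynomial (Fin n) k ⧸ 𝔭) g₁ g₂ h₁ h₂
    refine ⟨σ, fun a ha => ?_, ?_⟩
    · have : σ (MvPolynomial.aeval β (MvPolynomial.C (⟨a, ha⟩ : k))) =
          MvPolynomial.aeval α (MvPolynomial.C (⟨a, ha⟩ : k)) :=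
        hσ (Ideal.Quotient.mk 𝔭 (MvPolynomial.C ⟨a, ha⟩))
      exact (by simpa [g₁, g₂, MvPolynomial.aeval_C, Ideal.Quotient.lift_mk] using this :
        σ (algebraMap k ℂ ⟨a, ha⟩) = algebraMap k ℂ ⟨a, ha⟩)
    · funext i
      have : σ (MvPolynomial.aeval β (MvPolynomial.X i : MvPolynomial (Fin n) k)) =
          MvPolynomial.aeval α (MvPolynomial.X i : MvPolynomial (Fin n) k) :=
        hσ (Ideal.Quotient.mk 𝔭 (MvPolynomial.X i))
      have hβα : σ (β i) = α i := by simpa [g₁, g₂, Ideal.Quotient.lift_mk] using this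
      rw [← hβα, σ.symm_apply_apply]
end
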